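/- Consider the two-speed queue with parameters λ_a, λ_b ≥ 0, λ := λ_a + λ_b > 0, μ_a, μ_b > 0, γ > 0, δ > 0, and p_n := (λ_a/λ)(λ/(λ+δ))^n, p̄_n := 1 − p_n, and set r := λ/(λ+δ). Suppose real numbers π_0 and sequences (π_n^a)_{n≥1}, (π_n^b)_{n≥1} form a steady state, i.e.: for all n ≥ 2, λ(π_{n−1}^a − π_n^a) + (μ_a π_{n+1}^a + μ_b π_{n+1}^b) p_n − μ_a π_n^a + γ π_n^b = 0 and λ(π_{n−1}^b − π_n^b) + (μ_a π_{n+1}^a + μ_b π_{n+1}^b) p̄_n − μ_b π_n^b − γ π_n^b = 0; for n = 1, λ_a π_0 − λ π_1^a + (μ_a π_2^a + μ_b π_2^b) p_1 − μ_a π_1^a + γ π_1^b = 0 and λ_b π_0 − λ π_1^b + (μ_a π_2^a + μ_b π_2^b) p̄_1 − μ_b π_1^b − γ π_1^b = 0; and λ π_0 = μ_a π_1^a + μ_b π_1^b. Define the formal power series g := π_0 + ∑_{n≥1} (π_n^a + π_n^b) X^n ∈ ℝ⟦X⟧ and the constants u := λ_a(μ_a − μ_b)/λ², v := (λ_a μ_a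 + λ_b μ_b) π_0 / λ², w := (μ_a μ_b + λ_a μ_a + λ_b μ_b + γ μ_a) π_0 / λ², Δ := (λ − γ + μ_a − μ_b)² + 4λγ, and z^± := (μ_a + μ_b + λ + γ ± √Δ)/(2λ). Then the functional equation u · g(rX) = −(X − z^+)(X − z^−) · g(X) − v X + w holds as an identity of formal power series, where g(rX) denotes the rescaled series ∑_n g_n r^n X^n. -/

import Mathlib

/-- Functional equation for the generating function of the stationary
queue-length distribution of the two-speed queue:
`u g(rX) = −(X − z⁺)(X − z⁻) g(X) − vX + w` as formal power series. -/
theorem two_speed_queue_generating_function_equation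
    (lama lamb lam μa μb γ δ : ℝ)
    (hlama : 0 ≤ lama) (hlamb : 0 ≤ lamb)
    (hlamdef : lam = lama + lamb) (hlam : 0 < lam)
    (hμa : 0 < μa) (hμb : 0 < μb) (hγ : 0 < γ) (hδ : 0 < δ)
    (p : ℕ → ℝ) (hp : ∀ n, p n = (lama / lam) * (lam / (lam + δ)) ^ n)
    (π0 : ℝ) (πa πb : ℕ → ℝ)
    -- steady state equations for n ≥ 2
    (hssa : ∀ n, 2 ≤ n →
      lam * (πa (n - 1) - πa n) + (μa * πa (n + 1) + μb * πb (n + 1)) * p n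
        - μa * πa n + γ * πb n = 0)
    (hssb : ∀ n, 2 ≤ n →
      lam * (πb (n - 1) - πb n)
        + (μa * πa (n + 1) + μb * πb (n + 1)) * (1 - p n)
        - μb * πb n - γ * πb n = 0)
    -- steady state equations for n = 1
    (hssa1 : lama * π0 - lam * πa 1 + (μa * πa 2 + μb * πb 2) * p 1
        - μa * πa 1 + γ * πb 1 = 0)
    (hssb1 : lamb * π0 - lam * πb 1 + (μa * πa 2 + μb * πb 2) * (1 - p 1)
        - μb * πb 1 - γ * πb 1 = 0)
    -- steady state equation for n = 0
    (hss0 : lam * π0 = μa * πa 1 + μb * πb 1) :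
    let r := lam / (lam + δ)
    let g : PowerSeries ℝ :=
      PowerSeries.mk fun n => if n = 0 then π0 else πa n + πb n
    let u := lama * (μa - μb) / lam ^ 2
    let v := (lama * μa + lamb * μb) * π0 / lam ^ 2
    let w := (μa * μb + lama * μa + lamb * μb + γ * μa) * π0 / lam ^ 2
    let Δ := (lam - γ + μa - μb) ^ 2 + 4 * lam * γ
    let zp := (μa + μb + lam + γ + Real.sqrt Δ) / (2 * lam)
    let zm := (μa + μb + lam + γ - Real.sqrt Δ) / (2 * lam)
    PowerSeries.C u * PowerSeries.rescale r g
      = -((PowerSeries.X - PowerSeries.C zp)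
            * (PowerSeries.X - PowerSeries.C zm)) * g
        - PowerSeries.C v * PowerSeries.X + PowerSeries.C w := by
  intro r g u v w Δ zp zm
  have hlam' : lam ≠ 0 := hlam.ne'
  have hrdef : r = lam / (lam + δ) := rfl
  have hpr : ∀ n, lam * p n = lama * r ^ n := by
    intro n; rw [hp, hrdef]; field_simp
  -- H n : μa πa(n+1) + μb πb(n+1) = lam * G n
  have H : ∀ n : ℕ, μa * πa (n+1) + μb * πb (n+1)
      = lam * (if n = 0 then π0 else πa n + πb n) := by
    intro n
    induction n with
    | zero => simpa using hss0.symm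
    | succ k ih =>
      rcases Nat.eq_zero_or_pos k with rfl | hk
      · rw [if_neg (by norm_num)]
        norm_num
        linear_combination hssa1 + hssb1 - hss0 + π0 * hlamdef
      · have ha := hssa (k+1) (by omega)
        have hb := hssb (k+1) (by omega)
        simp only [Nat.add_sub_cancel] at ha hb
        rw [if_neg hk.ne'] at ih
        rw [if_neg (Nat.succ_ne_zero k)]
        linear_combination ha + hb + ih
  have Hn' : ∀ n : ℕ, 1 ≤ n → μa * πa (n+1) + μb * πb (n+1)
      = lam * (πa n + πb n) := by
    intro n hn
    have := H n
    rwa [if_neg (by omega)] at this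
  have hΔ : 0 ≤ Δ := by
    have h : Δ = (lam - γ + μa - μb) ^ 2 + 4 * lam * γ := rfl
    rw [h]; positivity
  have hsq : Real.sqrt Δ ^ 2 = Δ := Real.sq_sqrt hΔ
  have hzsum : zp + zm = (μa + μb + lam + γ) / lam := by
    show (μa + μb + lam + γ + Real.sqrt Δ) / (2 * lam)
        + (μa + μb + lam + γ - Real.sqrt Δ) / (2 * lam) = _
    field_simp
    ring
  have hzprod : zp * zm = (μa * μb + γ * μa + lam * μb) / lam ^ 2 := by
    show (μa + μb + lam + γ + Real.sqrt Δ) / (2 * lam)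
        * ((μa + μb + lam + γ - Real.sqrt Δ) / (2 * lam)) = _
    rw [div_mul_div_comm]
    rw [show (μa + μb + lam + γ + Real.sqrt Δ) * (μa + μb + lam + γ - Real.sqrt Δ)
        = (μa + μb + lam + γ)^2 - Real.sqrt Δ ^ 2 by ring, hsq]
    have h : Δ = (lam - γ + μa - μb) ^ 2 + 4 * lam * γ := rfl
    rw [h]
    field_simp
    ring
  have hfac : (PowerSeries.X - PowerSeries.C zp) * (PowerSeries.X - PowerSeries.C zm)
      = PowerSeries.X ^ 2 - PowerSeries.C ((μa + μb + lam + γ) / lam) * PowerSeries.X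
        + PowerSeries.C ((μa * μb + γ * μa + lam * μb) / lam ^ 2) := by
    rw [← hzsum, ← hzprod, map_add, map_mul]
    ring
  obtain ⟨R, hR⟩ : ∃ x : ℝ, lam / (lam + δ) = x := ⟨_, rfl⟩
  have hrR : r = R := hR
  rw [hrR] at hpr
  rw [hfac, hrR]
  ext n
  simp only [PowerSeries.coeff_C_mul, PowerSeries.coeff_rescale, PowerSeries.coeff_mk,
    map_add, map_sub, map_neg, neg_mul, sub_mul, add_mul, mul_assoc (PowerSeries.C _),
    PowerSeries.coeff_X_pow_mul', PowerSeries.coeff_C, PowerSeries.coeff_X]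
  rcases n with _|_|k
  · -- n = 0
    simp only [pow_zero, one_mul, g, u, w, PowerSeries.coeff_mk, if_pos rfl,
      PowerSeries.constantCoeff_mk, PowerSeries.coeff_zero_X_mul, if_true,
      if_neg (by omega : ¬ 2 ≤ 0), if_neg (by omega : ¬ (0:ℕ) = 1)]
    field_simp
    linear_combination μb*π0*hlamdef
  · -- n = 1
    norm_num
    simp only [g, u, v, PowerSeries.coeff_mk, PowerSeries.constantCoeff_mk, if_pos rfl,
      if_neg (one_ne_zero), if_true]
    have h2eq := Hn' 1 le_rfl
    norm_num at h2eq
    have hE : lam * (lama * π0 - lam * πa 1 + lama * R * (πa 1 + πb 1)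
        - μa * πa 1 + γ * πb 1) = 0 := by
      linear_combination lam * hssa1 - lama * R * h2eq - (μa * πa 2 + μb * πb 2) * hpr 1
    have E1 := (mul_eq_zero.mp hE).resolve_left hlam'
    have F1 : (μa - μb) * πa 1 = lam * π0 - μb * (πa 1 + πb 1) := by
      linear_combination -hss0
    field_simp
    linear_combination ((μa-μb)*E1 + (lam+μa+γ)*F1 - μb*π0*hlamdef)
  · -- n = k + 2
    have e2 : k + 1 + 1 = k + 2 := rfl
    rw [e2, PowerSeries.coeff_succ_X_mul]
    rw [if_pos (by omega : 2 ≤ k + 2), if_neg (by omega : ¬ k + 2 = 1),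
      if_neg (by omega : ¬ k + 2 = 0), show k + 2 - 2 = k from rfl]
    simp only [g, u, PowerSeries.coeff_mk, if_neg (Nat.succ_ne_zero (k+1)),
      if_neg (Nat.succ_ne_zero k)]
    obtain ⟨G0, hG0⟩ : ∃ x : ℝ, (if k = 0 then π0 else πa k + πb k) = x := ⟨_, rfl⟩
    rw [hG0]
    have hA := hssa (k+2) (by omega)
    rw [show k+2-1 = k+1 from rfl] at hA
    have hH2 := Hn' (k+2) (by omega)
    have hH1 := Hn' (k+1) (by omega)
    have hH0 := H k
    have hE : lam * (lam * (πa (k+1) - πa (k+2))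
        + lama * R^(k+2) * (πa (k+2) + πb (k+2))
        - μa * πa (k+2) + γ * πb (k+2)) = 0 := by
      linear_combination lam * hA - lama * R^(k+2) * hH2
        - (μa * πa (k+2+1) + μb * πb (k+2+1)) * hpr (k+2)
    have E2 := (mul_eq_zero.mp hE).resolve_left hlam'
    have F2 : (μa - μb) * πa (k+2)
        = lam * (πa (k+1) + πb (k+1)) - μb * (πa (k+2) + πb (k+2)) := by
      linear_combination hH1
    have F1 : (μa - μb) * πa (k+1)
        = lam * G0 - μb * (πa (k+1) + πb (k+1)) := by
      linear_combination hH0 + lam * hG0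
    field_simp
    linear_combination ((μa-μb)*E2 + (lam+μa+γ)*F2 - lam*F1)
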